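/- Let (a,b) be a fictitious-play trajectory. Then for every round t ≥ 0: −ρ_t ≤ Σ_{i=1}^t (2·u_B^i − 1) ≤ ρ_t. -/
import Mathlib


open MeasureTheory

/-- Bob's choice of the left or right piece. -/
inductive Choice
  | L
  | R
deriving DecidableEq

/-- The cumulative valuation `V(x) = ∫_0^x v`. -/
noncomputable def cumul (v : ℝ → ℝ) (x : ℝ) : ℝ := ∫ y in (0:ℝ)..x, v y

/-- `v` is an integrable value density on `[0,1]`, bounded between `lo` and `hi`,
integrating to `1`. -/
def IsDensity (lo hi : ℝ) (v : ℝ → ℝ) : Prop :=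
  IntervalIntegrable v volume 0 1 ∧
  (∀ x ∈ Set.Icc (0:ℝ) 1, lo ≤ v x ∧ v x ≤ hi) ∧
  (∫ y in (0:ℝ)..1, v y) = 1

/-- Alice's round-`t` utility: if Bob picks `L` she gets `[a_t,1]`, else `[0,a_t]`. -/
noncomputable def uA (vA : ℝ → ℝ) (a : ℕ → ℝ) (b : ℕ → Choice) (t : ℕ) : ℝ :=
  if b t = Choice.L then 1 - cumul vA (a t) else cumul vA (a t)

/-- Bob's round-`t` utility: if he picks `L` he gets `[0,a_t]`, else `[a_t,1]`. -/
noncomputable def uB (vB : ℝ → ℝ) (a : ℕ → ℝ) (b : ℕ → Choice) (t : ℕ) : ℝ :=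
  if b t = Choice.L then cumul vB (a t) else 1 - cumul vB (a t)

/-- `α_t = r_t − ℓ_t`: number of `R` choices minus number of `L` choices up to round `t`. -/
noncomputable def alphaFP (b : ℕ → Choice) (t : ℕ) : ℝ :=
  ∑ i ∈ Finset.Icc 1 t, (if b i = Choice.R then (1:ℝ) else -1)

/-- `β_t = Σ_{i=1}^t (2 V_B(a_i) − 1)`. -/
noncomputable def betaFP (vB : ℝ → ℝ) (a : ℕ → ℝ) (t : ℕ) : ℝ :=
  ∑ i ∈ Finset.Icc 1 t, (2 * cumul vB (a i) - 1)

/-- The radius `ρ_t = |α_t| + |β_t|`. -/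
noncomputable def rhoFP (vB : ℝ → ℝ) (a : ℕ → ℝ) (b : ℕ → Choice) (t : ℕ) : ℝ :=
  |alphaFP b t| + |betaFP vB a t|

/-- `(a,b)` is a fictitious-play trajectory. -/
def IsFictitiousPlay (vB : ℝ → ℝ) (a : ℕ → ℝ) (b : ℕ → Choice) : Prop :=
  ∀ t : ℕ,
    (0 < alphaFP b t → a (t+1) = 1) ∧
    (alphaFP b t < 0 → a (t+1) = 0) ∧
    (0 < betaFP vB a t → b (t+1) = Choice.L) ∧
    (betaFP vB a t < 0 → b (t+1) = Choice.R)

/-- Round `t` is axis-crossing. -/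
def AxisCrossing (vB : ℝ → ℝ) (a : ℕ → ℝ) (b : ℕ → Choice) (t : ℕ) : Prop :=
  alphaFP b t = 0 ∨
  (betaFP vB a t ≤ 0 ∧ 0 < betaFP vB a (t+1)) ∨
  (0 ≤ betaFP vB a t ∧ betaFP vB a (t+1) < 0)

lemma cumul_mem {δ Δ : ℝ} (hδ : 0 < δ) {v : ℝ → ℝ} (hv : IsDensity δ Δ v)
    {x : ℝ} (hx : x ∈ Set.Icc (0:ℝ) 1) : cumul v x ∈ Set.Icc (0:ℝ) 1 := by
  obtain ⟨hint, hbd, hone⟩ := hv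
  obtain ⟨hx0, hx1⟩ := hx
  have hmemx : x ∈ Set.uIcc (0:ℝ) 1 := by
    rw [Set.uIcc_of_le (by norm_num)]; exact ⟨hx0, hx1⟩
  have h0x : IntervalIntegrable v volume 0 x :=
    hint.mono_set (Set.uIcc_subset_uIcc (Set.left_mem_uIcc) hmemx)
  have hx1' : IntervalIntegrable v volume x 1 :=
    hint.mono_set (Set.uIcc_subset_uIcc hmemx (Set.right_mem_uIcc))
  constructor
  · exact intervalIntegral.integral_nonneg hx0
      (fun u hu => le_trans hδ.le (hbd u ⟨hu.1, le_trans hu.2 hx1⟩).1)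
  · have hadd : cumul v x + ∫ y in x..(1:ℝ), v y = 1 := by
      rw [cumul, intervalIntegral.integral_add_adjacent_intervals h0x hx1']; exact hone
    have hnn : 0 ≤ ∫ y in x..(1:ℝ), v y :=
      intervalIntegral.integral_nonneg hx1
        (fun u hu => le_trans hδ.le (hbd u ⟨le_trans hx0 hu.1, hu.2⟩).1)
    linarith

lemma bob_payoff_aux (δ Δ : ℝ) (hδ : 0 < δ) (vB : ℝ → ℝ) (hB : IsDensity δ Δ vB)
    (a : ℕ → ℝ) (b : ℕ → Choice)
    (ha : ∀ t : ℕ, 1 ≤ t → a t ∈ Set.Icc (0:ℝ) 1)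
    (hfp : IsFictitiousPlay vB a b) (t : ℕ) :
    -|alphaFP b t| ≤ ∑ i ∈ Finset.Icc 1 t, (2 * uB vB a b i - 1) ∧
    ∑ i ∈ Finset.Icc 1 t, (2 * uB vB a b i - 1) ≤ |betaFP vB a t| := by
  induction t with
  | zero => simp [alphaFP, betaFP]
  | succ t ih =>
    obtain ⟨ih1, ih2⟩ := ih
    have hsum : ∑ i ∈ Finset.Icc 1 (t+1), (2 * uB vB a b i - 1)
        = (∑ i ∈ Finset.Icc 1 t, (2 * uB vB a b i - 1)) + (2 * uB vB a b (t+1) - 1) :=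
      Finset.sum_Icc_succ_top (Nat.le_add_left 1 t) _
    have hα : alphaFP b (t+1)
        = alphaFP b t + (if b (t+1) = Choice.R then (1:ℝ) else -1) :=
      Finset.sum_Icc_succ_top (Nat.le_add_left 1 t) _
    have hβ : betaFP vB a (t+1)
        = betaFP vB a t + (2 * cumul vB (a (t+1)) - 1) :=
      Finset.sum_Icc_succ_top (Nat.le_add_left 1 t) _
    obtain ⟨hfp1, hfp2, hfp3, hfp4⟩ := hfp t
    have hc := cumul_mem hδ hB (ha (t+1) (by omega))
    have hc0 : (0:ℝ) ≤ cumul vB (a (t+1)) := hc.1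
    have hc1 : cumul vB (a (t+1)) ≤ 1 := hc.2
    have hcum1 : cumul vB (1:ℝ) = 1 := hB.2.2
    have hcum0 : cumul vB (0:ℝ) = 0 := intervalIntegral.integral_same
    constructor
    · -- lower bound via |alpha|
      have step : -(2 * uB vB a b (t+1) - 1) ≤ |alphaFP b (t+1)| - |alphaFP b t| := by
        rcases lt_trichotomy (alphaFP b t) 0 with h | h | h
        · have ha0 : a (t+1) = 0 := hfp2 h
          have habs : |alphaFP b t| = -(alphaFP b t) := abs_of_neg h
          cases hb : b (t+1) with
          | L =>
            have := neg_le_abs (alphaFP b (t+1))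
            rw [hα, hb] at this ⊢
            simp only [uB, hb, ha0, hcum0, if_true]
            simp only [reduceCtorEq, if_false] at this ⊢
            linarith
          | R =>
            have := neg_le_abs (alphaFP b (t+1))
            rw [hα, hb] at this ⊢
            simp only [uB, hb, ha0, hcum0, reduceCtorEq, if_false, if_true] at this ⊢
            linarith
        · have habs : |alphaFP b t| = 0 := by rw [h, abs_zero]
          have h1 : |alphaFP b (t+1)| = 1 := by
            rw [hα, h, zero_add]
            cases hb : b (t+1) <;> simp
          rw [habs, h1]
          cases hb : b (t+1) <;> simp only [uB, hb, if_true, reduceCtorEq, if_false] <;> linarith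
        · have ha1 : a (t+1) = 1 := hfp1 h
          have habs : |alphaFP b t| = alphaFP b t := abs_of_pos h
          cases hb : b (t+1) with
          | L =>
            have := le_abs_self (alphaFP b (t+1))
            rw [hα, hb] at this ⊢
            simp only [uB, hb, ha1, hcum1, if_true]
            simp only [reduceCtorEq, if_false] at this ⊢
            linarith
          | R =>
            have := le_abs_self (alphaFP b (t+1))
            rw [hα, hb] at this ⊢
            simp only [uB, hb, ha1, hcum1, reduceCtorEq, if_false, if_true] at this ⊢
            linarith
      rw [hsum]; linarith
    · -- upper bound via |beta|
      have step : 2 * uB vB a b (t+1) - 1 ≤ |betaFP vB a (t+1)| - |betaFP vB a t| := by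
        rcases lt_trichotomy (betaFP vB a t) 0 with h | h | h
        · have hb : b (t+1) = Choice.R := hfp4 h
          have habs : |betaFP vB a t| = -(betaFP vB a t) := abs_of_neg h
          have := neg_le_abs (betaFP vB a (t+1))
          rw [hβ] at this ⊢
          simp only [uB, hb, reduceCtorEq, if_false]
          linarith
        · have habs : |betaFP vB a t| = 0 := by rw [h, abs_zero]
          have := neg_le_abs (betaFP vB a (t+1))
          have h2 := le_abs_self (betaFP vB a (t+1))
          rw [hβ, h, zero_add] at this h2 ⊢
          rw [abs_zero]
          cases hb : b (t+1) <;> simp only [uB, hb, if_true, reduceCtorEq, if_false] <;> linarith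
        · have hb : b (t+1) = Choice.L := hfp3 h
          have habs : |betaFP vB a t| = betaFP vB a t := abs_of_pos h
          have := le_abs_self (betaFP vB a (t+1))
          rw [hβ] at this ⊢
          simp only [uB, hb, if_true]
          linarith
      rw [hsum]; linarith

/-- Under fictitious play, Bob's centered cumulative payoff is bounded by
the radius: `−ρ_t ≤ Σ_{i=1}^t (2u_B^i − 1) ≤ ρ_t` for every `t`. -/
theorem bob_payoff_bounded_by_radius
    (δ Δ : ℝ) (hδ : 0 < δ) (hδΔ : δ ≤ Δ)
    (vA vB : ℝ → ℝ) (hA : IsDensity δ Δ vA) (hB : IsDensity δ Δ vB)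
    (a : ℕ → ℝ) (b : ℕ → Choice)
    (ha : ∀ t : ℕ, 1 ≤ t → a t ∈ Set.Icc (0:ℝ) 1)
    (hfp : IsFictitiousPlay vB a b) (t : ℕ) :
    -(rhoFP vB a b t) ≤ ∑ i ∈ Finset.Icc 1 t, (2 * uB vB a b i - 1) ∧
    ∑ i ∈ Finset.Icc 1 t, (2 * uB vB a b i - 1) ≤ rhoFP vB a b t := by
  obtain ⟨h1, h2⟩ := bob_payoff_aux δ Δ hδ vB hB a b ha hfp t
  have hα := abs_nonneg (alphaFP b t)
  have hβ := abs_nonneg (betaFP vB a t)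
  unfold rhoFP
  constructor <;> linarith
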